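/- There exist constants C₁ > 0 and C₂ > 0, depending only on α, β and the boundedness constants of a, b and c, such that for every (u,p) ∈ H × Q there exists (v,q) ∈ H × Q with N(v,q) ≤ C₁ N(u,p) and A((u,p),(v,q)) ≥ C₂ N(u,p)². -/

import Mathlib

set_option maxHeartbeats 2000000 in
/-- stability (inf-sup-type) of the combined bilinear form
`A((u,p),(v,q)) = a(u,v) + b(v,p) + b(u,q) − c(p,q)` with respect to the weighted norm
`N(u,p) = (a(u,u) + ‖p‖² + c(p,p))^{1/2}`. -/
theorem combined_form_stability
    {H Q : Type*}
    [NormedAddCommGroup H] [InnerProductSpace ℝ H] [CompleteSpace H]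
    [NormedAddCommGroup Q] [InnerProductSpace ℝ Q] [CompleteSpace Q]
    (a : H →L[ℝ] H →L[ℝ] ℝ) (b : H →L[ℝ] Q →L[ℝ] ℝ) (c : Q →L[ℝ] Q →L[ℝ] ℝ)
    (ha_symm : ∀ u v : H, a u v = a v u)
    (α : ℝ) (hα : 0 < α) (ha_coer : ∀ u : H, α * ‖u‖ ^ 2 ≤ a u u)
    (β : ℝ) (hβ : 0 < β)
    (hb_infsup : ∀ q : Q, ∃ v : H, v ≠ 0 ∧ β * ‖v‖ * ‖q‖ ≤ b v q)
    (hc_symm : ∀ p q : Q, c p q = c q p) (hc_pos : ∀ p : Q, 0 ≤ c p p) :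
    ∃ C₁ > (0 : ℝ), ∃ C₂ > (0 : ℝ), ∀ (u : H) (p : Q), ∃ (v : H) (q : Q),
      Real.sqrt (a v v + ‖q‖ ^ 2 + c q q) ≤ C₁ * Real.sqrt (a u u + ‖p‖ ^ 2 + c p p) ∧
      C₂ * Real.sqrt (a u u + ‖p‖ ^ 2 + c p p) ^ 2 ≤
        a u v + b v p + b u q - c p q := by
  obtain ⟨Ca, hCa_def⟩ : ∃ x : ℝ, x = ‖a‖ + 1 := ⟨_, rfl⟩
  have hCa : 0 < Ca := by rw [hCa_def]; positivity
  obtain ⟨δ, hδ_def⟩ : ∃ x : ℝ, x = α * β / Ca ^ 2 := ⟨_, rfl⟩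
  have hδ : 0 < δ := by rw [hδ_def]; positivity
  obtain ⟨K, hK_def⟩ : ∃ x : ℝ, x = 2 * Ca / α + 2 * Ca * δ ^ 2 + 2 := ⟨_, rfl⟩
  have hK : 0 < K := by rw [hK_def]; positivity
  have ha_bound : ∀ x y : H, |a x y| ≤ Ca * ‖x‖ * ‖y‖ := by
    intro x y
    have h1 : ‖a x y‖ ≤ ‖a x‖ * ‖y‖ := (a x).le_opNorm y
    have h2 : ‖a x‖ ≤ ‖a‖ * ‖x‖ := a.le_opNorm x
    have : |a x y| = ‖a x y‖ := rfl
    rw [this]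
    calc ‖a x y‖ ≤ ‖a x‖ * ‖y‖ := h1
      _ ≤ (‖a‖ * ‖x‖) * ‖y‖ := by
          apply mul_le_mul_of_nonneg_right h2 (norm_nonneg y)
      _ ≤ Ca * ‖x‖ * ‖y‖ := by
          have h3 : ‖a‖ ≤ Ca := by simp [hCa_def]
          have := mul_le_mul_of_nonneg_right h3 (norm_nonneg x)
          exact mul_le_mul_of_nonneg_right this (norm_nonneg y)
  have ha_nonneg : ∀ x : H, 0 ≤ a x x := fun x =>
    le_trans (by positivity) (ha_coer x)
  refine ⟨Real.sqrt K, Real.sqrt_pos.mpr hK,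
    min (1/2) (α * β ^ 2 / (2 * Ca ^ 2)), lt_min (by norm_num) (by positivity),
    fun u p => ?_⟩
  obtain ⟨v₀, hv₀ne, hv₀⟩ := hb_infsup p
  have hv₀norm : (0 : ℝ) < ‖v₀‖ := norm_pos_iff.mpr hv₀ne
  obtain ⟨t, ht_def⟩ : ∃ x : ℝ, x = ‖p‖ / ‖v₀‖ := ⟨_, rfl⟩
  have ht : 0 ≤ t := by rw [ht_def]; positivity
  obtain ⟨w, hw_def⟩ : ∃ x : H, x = t • v₀ := ⟨_, rfl⟩
  have hw_norm : ‖w‖ = ‖p‖ := by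
    rw [hw_def, norm_smul, Real.norm_eq_abs, abs_of_nonneg ht, ht_def]
    field_simp
  have hbw : β * ‖p‖ ^ 2 ≤ b w p := by
    have : b w p = t * b v₀ p := by
      rw [hw_def]; simp [map_smul]
    rw [this]
    have h1 : t * (β * ‖v₀‖ * ‖p‖) ≤ t * b v₀ p :=
      mul_le_mul_of_nonneg_left hv₀ ht
    calc β * ‖p‖ ^ 2 = t * (β * ‖v₀‖ * ‖p‖) := by
          rw [ht_def]; field_simp
      _ ≤ t * b v₀ p := h1
  refine ⟨u + δ • w, -p, ?_, ?_⟩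
  · -- norm bound
    have hq1 : ‖(-p : Q)‖ = ‖p‖ := norm_neg p
    have hq2 : c (-p) (-p) = c p p := by simp
    rw [hq1, hq2]
    have hv_norm : ‖u + δ • w‖ ≤ ‖u‖ + δ * ‖p‖ := by
      calc ‖u + δ • w‖ ≤ ‖u‖ + ‖δ • w‖ := norm_add_le _ _
        _ = ‖u‖ + δ * ‖p‖ := by
            rw [norm_smul, Real.norm_eq_abs, abs_of_nonneg hδ.le, hw_norm]
    have havv : a (u + δ • w) (u + δ • w) ≤ Ca * ‖u + δ • w‖ * ‖u + δ • w‖ :=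
      le_trans (le_abs_self _) (ha_bound _ _)
    have hsq : ‖u + δ • w‖ * ‖u + δ • w‖ ≤ 2 * ‖u‖ ^ 2 + 2 * δ ^ 2 * ‖p‖ ^ 2 := by
      nlinarith [norm_nonneg (u + δ • w), norm_nonneg u, norm_nonneg p,
        sq_nonneg (‖u‖ - δ * ‖p‖)]
    have hcoer := ha_coer u
    have key : a (u + δ • w) (u + δ • w) + ‖p‖ ^ 2 + c p p ≤
        K * (a u u + ‖p‖ ^ 2 + c p p) := by
      have h1 : 2 * Ca * ‖u‖ ^ 2 ≤ (2 * Ca / α) * a u u := by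
        rw [div_mul_eq_mul_div, le_div_iff₀ hα]
        nlinarith
      have e1 : a (u + δ • w) (u + δ • w) ≤
          (2 * Ca / α) * a u u + 2 * Ca * δ ^ 2 * ‖p‖ ^ 2 := by
        nlinarith [mul_le_mul_of_nonneg_left hsq hCa.le]
      have k1 : (0:ℝ) ≤ 2 * Ca / α := by positivity
      have k2 : (0:ℝ) ≤ 2 * Ca * δ ^ 2 := by positivity
      have X := ha_nonneg u
      have Y : (0:ℝ) ≤ ‖p‖ ^ 2 := sq_nonneg _
      have Z := hc_pos p
      rw [hK_def]
      nlinarith [mul_nonneg k1 X, mul_nonneg k2 X, mul_nonneg k1 Y,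
        mul_nonneg k1 Z, mul_nonneg k2 Z]
    calc Real.sqrt (a (u + δ • w) (u + δ • w) + ‖p‖ ^ 2 + c p p)
        ≤ Real.sqrt (K * (a u u + ‖p‖ ^ 2 + c p p)) := Real.sqrt_le_sqrt key
      _ = Real.sqrt K * Real.sqrt (a u u + ‖p‖ ^ 2 + c p p) := Real.sqrt_mul hK.le _
  · -- coercivity bound
    have hN : 0 ≤ a u u + ‖p‖ ^ 2 + c p p := by
      have := ha_nonneg u; have := hc_pos p; positivity
    rw [Real.sq_sqrt hN]
    have hexp : a u (u + δ • w) + b (u + δ • w) p + b u (-p) - c p (-p)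
        = a u u + δ * (a u w) + δ * (b w p) + c p p := by
      simp [map_add, map_smul]
      ring
    rw [hexp]
    have hauw : -(Ca * ‖u‖ * ‖p‖) ≤ a u w := by
      have := ha_bound u w
      rw [hw_norm] at this
      linarith [neg_abs_le (a u w)]
    have hyoung : Ca * ‖u‖ * ‖p‖ ≤ Ca ^ 2 * ‖u‖ ^ 2 / (2 * β) + β * ‖p‖ ^ 2 / 2 := by
      rw [div_add_div _ _ (by positivity : (2 * β : ℝ) ≠ 0) (by norm_num : (2:ℝ) ≠ 0)]
      rw [le_div_iff₀ (by positivity)]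
      nlinarith [sq_nonneg (Ca * ‖u‖ - β * ‖p‖)]
    have hcoer := ha_coer u
    have hδval : δ * Ca ^ 2 = α * β := by
      rw [hδ_def]; field_simp
    have hmin1 : min (1/2) (α * β ^ 2 / (2 * Ca ^ 2)) ≤ 1/2 := min_le_left _ _
    have hmin2 : min (1/2) (α * β ^ 2 / (2 * Ca ^ 2)) ≤ α * β ^ 2 / (2 * Ca ^ 2) :=
      min_le_right _ _
    have hmin0 : 0 < min (1/2) (α * β ^ 2 / (2 * Ca ^ 2)) :=
      lt_min (by norm_num) (by positivity)
    -- δ * a u w ≥ -δ*(Ca²‖u‖²/(2β) + β‖p‖²/2) ; δ*Ca²/(2β) = α/2 ; δ*β = αβ²/Ca²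
    have h1 : δ * (Ca * ‖u‖ * ‖p‖) ≤ (α / 2) * ‖u‖ ^ 2 + δ * β * ‖p‖ ^ 2 / 2 := by
      have := mul_le_mul_of_nonneg_left hyoung hδ.le
      have heq : δ * (Ca ^ 2 * ‖u‖ ^ 2 / (2 * β)) = (α / 2) * ‖u‖ ^ 2 := by
        field_simp
        nlinarith [hδval]
      nlinarith
    have h2 : -(δ * (Ca * ‖u‖ * ‖p‖)) ≤ δ * a u w :=
      by nlinarith [mul_le_mul_of_nonneg_left hauw hδ.le]
    have h3 : δ * (β * ‖p‖ ^ 2) ≤ δ * b w p :=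
      mul_le_mul_of_nonneg_left hbw hδ.le
    have hδβ : δ * β = α * β ^ 2 / Ca ^ 2 := by
      rw [hδ_def]; field_simp
    have hcp := hc_pos p
    have hCa2 : (0:ℝ) < Ca ^ 2 := by positivity
    -- combine: A ≥ (1/2) a u u + (δβ/2)‖p‖² + c p p ≥ C₂ N²
    have hA : (1/2) * a u u + (δ * β / 2) * ‖p‖ ^ 2 + c p p ≤
        a u u + δ * a u w + δ * b w p + c p p := by
      nlinarith
    have hfinal : min (1/2) (α * β ^ 2 / (2 * Ca ^ 2)) * (a u u + ‖p‖ ^ 2 + c p p) ≤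
        (1/2) * a u u + (δ * β / 2) * ‖p‖ ^ 2 + c p p := by
      have hms : δ * β / 2 = α * β ^ 2 / (2 * Ca ^ 2) := by
        rw [hδβ]; field_simp
      rw [hms]
      have hmin1' : min (1/2) (α * β ^ 2 / (2 * Ca ^ 2)) ≤ 1 := by linarith
      nlinarith [ha_nonneg u, sq_nonneg (‖p‖), hcp,
        mul_le_mul_of_nonneg_right hmin1 (ha_nonneg u),
        mul_le_mul_of_nonneg_right hmin2 (sq_nonneg (‖p‖)),
        mul_le_mul_of_nonneg_right hmin1' hcp]
    linarith
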